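/- Let α = 1/2 and p₀ < 0. For h > 0 the bouncing-time function T_b(h) = √2 ∫_0^{u⁺(h)} du/√(h - V(u)), where u⁺(h) is the unique positive root of V(u) = h with V'(u⁺(h)) > 0, is given explicitly by T_b(h) = (2√2/(-p₀)^{3/2})·(π/2 + arctan((-p₀h)^{-1/2})) - 2√(2h)/p₀. -/

import Mathlib

open Real Filter Set Topology intervalIntegral MeasureTheory

set_option maxHeartbeats 1000000 in
theorem stmt6 (p₀ h up : ℝ) (hp : p₀ < 0) (hh : 0 < h)
    (V : ℝ → ℝ) (hV : ∀ u : ℝ, V u = -p₀ * u - 2 * Real.sqrt u)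
    (hup : 0 < up) (hroot : V up = h) (hslope : 0 < deriv V up)
    (huniq : ∀ u : ℝ, 0 < u → V u = h → 0 < deriv V u → u = up) :
    Real.sqrt 2 * ∫ u in (0:ℝ)..up, 1 / Real.sqrt (h - V u)
      = 2 * Real.sqrt 2 / (-p₀) ^ ((3:ℝ)/2) * (π / 2 + arctan ((-p₀ * h) ^ (-(1/2) : ℝ)))
        - 2 * Real.sqrt (2 * h) / p₀ := by
  have hVfun : V = fun u => -p₀ * u - 2 * Real.sqrt u := funext hV
  subst hVfun
  set q : ℝ := -p₀ with hqdef
  have hq0 : 0 < q := by rw [hqdef]; linarith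
  have hp₀ : p₀ = -q := by rw [hqdef]; ring
  have hsqq : (0:ℝ) < Real.sqrt q := Real.sqrt_pos.mpr hq0
  have hqq : Real.sqrt q * Real.sqrt q = q := Real.mul_self_sqrt hq0.le
  set s : ℝ := Real.sqrt up with hsdef
  have hs0 : 0 < s := Real.sqrt_pos.mpr hup
  have hs2 : s ^ 2 = up := Real.sq_sqrt hup.le
  -- derivative of V at up
  have hdV : HasDerivAt (fun u => q * u - 2 * Real.sqrt u) (q * 1 - 2 * (1 / (2 * s))) up :=
    ((hasDerivAt_id up).const_mul q).sub ((Real.hasDerivAt_sqrt hup.ne').const_mul 2)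
  have hqs : 1 < q * s := by
    rw [hdV.deriv] at hslope
    have h2 : 1 / s < q := by
      have h3 : 2 * (1 / (2 * s)) = 1 / s := by field_simp
      nlinarith [hslope]
    exact (div_lt_iff₀ hs0).1 h2
  have hE : q * up - 2 * s = h := hroot
  set c : ℝ := Real.sqrt (1 + q * h) with hcdef
  have hqh : 0 < q * h := mul_pos hq0 hh
  have hc2 : c ^ 2 = 1 + q * h := Real.sq_sqrt (by linarith)
  have hc0 : 0 < c := Real.sqrt_pos.mpr (by linarith)
  have hc1 : 1 < c := by nlinarith [hc2, hc0, hqh]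
  have hcs : q * s - 1 = c := by
    have h1 : 1 + q * h = (q * s - 1) ^ 2 := by
      linear_combination (-q) * hE + (-q^2) * hs2
    rw [hcdef, h1, Real.sqrt_sq (by linarith)]
  -- the antiderivative
  set F : ℝ → ℝ := fun u =>
      -(2/q) * Real.sqrt (h - (q * u - 2 * Real.sqrt u))
        + (2 * Real.sqrt q / q ^ 2) * Real.arcsin ((q * Real.sqrt u - 1) / c) with hFdef
  -- positivity of h - V on the open interval
  have hgpos : ∀ u ∈ Ioo (0:ℝ) up, 0 < h - (q * u - 2 * Real.sqrt u) := by
    intro u hu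
    have ht0 : 0 < Real.sqrt u := Real.sqrt_pos.mpr hu.1
    have ht2 : (Real.sqrt u) ^ 2 = u := Real.sq_sqrt hu.1.le
    have hts : Real.sqrt u < s := by
      rw [hsdef]; exact Real.sqrt_lt_sqrt hu.1.le hu.2
    nlinarith [hc2, hcs, mul_pos hq0 ht0, mul_pos hq0 (sub_pos.mpr hts),
      mul_pos (mul_pos hq0 ht0) (mul_pos hq0 (sub_pos.mpr hts))]
  -- derivative of F
  have hFderiv : ∀ u ∈ Ioo (0:ℝ) up,
      HasDerivAt F (1 / Real.sqrt (h - (q * u - 2 * Real.sqrt u))) u := by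
    intro u hu
    have ht0 : 0 < Real.sqrt u := Real.sqrt_pos.mpr hu.1
    have ht2 : (Real.sqrt u) ^ 2 = u := Real.sq_sqrt hu.1.le
    have hts : Real.sqrt u < s := by
      rw [hsdef]; exact Real.sqrt_lt_sqrt hu.1.le hu.2
    have hg : 0 < h - (q * u - 2 * Real.sqrt u) := hgpos u hu
    have hsg : 0 < Real.sqrt (h - (q * u - 2 * Real.sqrt u)) := Real.sqrt_pos.mpr hg
    -- the arcsin argument is in (-1, 1)
    have hkey : c ^ 2 - (q * Real.sqrt u - 1) ^ 2 = q * (h - (q * u - 2 * Real.sqrt u)) := by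
      linear_combination hc2 - q^2 * ht2
    have hx2 : 1 - ((q * Real.sqrt u - 1) / c) ^ 2
        = q * (h - (q * u - 2 * Real.sqrt u)) / c ^ 2 := by
      rw [div_pow, ← hkey]
      field_simp
    have hxlt : ((q * Real.sqrt u - 1) / c) ^ 2 < 1 := by
      nlinarith [hx2, div_pos (mul_pos hq0 hg) (pow_pos hc0 2)]
    have hx1 : (q * Real.sqrt u - 1) / c ≠ 1 := by
      intro hcon; rw [hcon] at hxlt; norm_num at hxlt
    have hxm1 : (q * Real.sqrt u - 1) / c ≠ -1 := by
      intro hcon; rw [hcon] at hxlt; norm_num at hxlt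
    have hinner : HasDerivAt (fun u : ℝ => h - (q * u - 2 * Real.sqrt u))
        (0 - (q * 1 - 2 * (1 / (2 * Real.sqrt u)))) u :=
      (hasDerivAt_const u h).sub
        (((hasDerivAt_id u).const_mul q).sub ((Real.hasDerivAt_sqrt hu.1.ne').const_mul 2))
    have h1 : HasDerivAt (fun u : ℝ => Real.sqrt (h - (q * u - 2 * Real.sqrt u)))
        ((0 - (q * 1 - 2 * (1 / (2 * Real.sqrt u))))
          / (2 * Real.sqrt (h - (q * u - 2 * Real.sqrt u)))) u :=
      hinner.sqrt hg.ne'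
    have harg : HasDerivAt (fun u : ℝ => (q * Real.sqrt u - 1) / c)
        ((q * (1 / (2 * Real.sqrt u))) / c) u :=
      (((Real.hasDerivAt_sqrt hu.1.ne').const_mul q).sub_const 1).div_const c
    have harcsin : HasDerivAt (fun u : ℝ => Real.arcsin ((q * Real.sqrt u - 1) / c))
        ((1 / Real.sqrt (1 - ((q * Real.sqrt u - 1) / c) ^ 2))
          * ((q * (1 / (2 * Real.sqrt u))) / c)) u :=
      HasDerivAt.comp (h₂ := Real.arcsin) u (Real.hasDerivAt_arcsin hxm1 hx1) harg
    have hF := (h1.const_mul (-(2/q))).add (harcsin.const_mul (2 * Real.sqrt q / q ^ 2))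
    refine HasDerivAt.congr_deriv (f := F) hF ?_
    have hsqrt1x : Real.sqrt (1 - ((q * Real.sqrt u - 1) / c) ^ 2)
        = Real.sqrt q * Real.sqrt (h - (q * u - 2 * Real.sqrt u)) / c := by
      rw [hx2, Real.sqrt_div (by positivity), Real.sqrt_mul hq0.le,
        Real.sqrt_sq hc0.le]
    rw [hsqrt1x]
    field_simp
    ring
  -- continuity of F
  have hFcont : ContinuousOn F (Icc 0 up) := by
    apply Continuous.continuousOn
    apply Continuous.add
    · exact continuous_const.mul
        ((continuous_const.sub ((continuous_const.mul continuous_id).sub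
          (continuous_const.mul Real.continuous_sqrt))).sqrt)
    · exact continuous_const.mul (Real.continuous_arcsin.comp
        (((continuous_const.mul Real.continuous_sqrt).sub continuous_const).div_const c))
  -- integrability
  have hint : IntervalIntegrable (fun u => 1 / Real.sqrt (h - (q * u - 2 * Real.sqrt u)))
      volume 0 up := by
    rw [intervalIntegrable_iff_integrableOn_Ioc_of_le hup.le]
    exact intervalIntegral.integrableOn_deriv_of_nonneg hFcont hFderiv
      (fun x hx => by positivity)
  have key : (∫ u in (0:ℝ)..up, 1 / Real.sqrt (h - (q * u - 2 * Real.sqrt u))) = F up - F 0 :=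
    intervalIntegral.integral_eq_sub_of_hasDeriv_right_of_le hup.le hFcont
      (fun x hx => (hFderiv x hx).hasDerivWithinAt) hint
  -- evaluate F at the endpoints
  have hFup : F up = (2 * Real.sqrt q / q ^ 2) * (π / 2) := by
    rw [hFdef]
    simp only
    rw [← hsdef, show h - (q * up - 2 * s) = 0 by linarith [hE], Real.sqrt_zero,
      show (q * s - 1) / c = 1 by rw [hcs]; field_simp, Real.arcsin_one]
    ring
  have hF0 : F 0 = -(2 / q) * Real.sqrt h + (2 * Real.sqrt q / q ^ 2) * (-Real.arcsin (1 / c)) := by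
    have e1 : h - (q * 0 - 2 * Real.sqrt 0) = h := by rw [Real.sqrt_zero]; ring
    have e2 : (q * Real.sqrt 0 - 1) / c = -(1 / c) := by rw [Real.sqrt_zero]; ring
    rw [hFdef]
    simp only
    rw [e1, e2, Real.arcsin_neg]
  -- the arctan identity
  have hw0 : 0 < Real.sqrt (q * h) := Real.sqrt_pos.mpr hqh
  have hw2 : Real.sqrt (q * h) ^ 2 = q * h := Real.sq_sqrt hqh.le
  have hrp : (q * h) ^ (-(1/2) : ℝ) = 1 / Real.sqrt (q * h) := by
    rw [Real.rpow_neg hqh.le, ← Real.sqrt_eq_rpow, one_div]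
  have harct : Real.arctan (1 / Real.sqrt (q * h)) = Real.arcsin (1 / c) := by
    rw [Real.arctan_eq_arcsin]
    congr 1
    have e3 : 1 + (1 / Real.sqrt (q * h)) ^ 2 = (c / Real.sqrt (q * h)) ^ 2 := by
      field_simp
      linear_combination hw2 - hc2
    rw [e3, Real.sqrt_sq (by positivity)]
    field_simp
  -- rpow of q
  have hq32 : q ^ ((3:ℝ)/2) = q * Real.sqrt q := by
    rw [show ((3:ℝ)/2) = 1 + 1/2 by norm_num, Real.rpow_add hq0, Real.rpow_one,
      ← Real.sqrt_eq_rpow]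
  have hcoef : 2 * Real.sqrt 2 / (q * Real.sqrt q) = Real.sqrt 2 * (2 * Real.sqrt q / q ^ 2) := by
    field_simp
    linear_combination (-1) * hqq
  have h2h : Real.sqrt (2 * h) = Real.sqrt 2 * Real.sqrt h := Real.sqrt_mul (by norm_num) h
  -- assemble
  rw [key, hFup, hF0, hp₀, hq32, hrp, harct, hcoef, h2h]
  have hqne : q ≠ 0 := hq0.ne'
  have hpne : p₀ ≠ 0 := ne_of_lt hp
  field_simp
  linear_combination (0:ℝ) * mul_inv_cancel₀ hpne
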